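/- For the one-dimensional ferromagnetic Ising model on {0,…,N} with couplings J_x > 0 and fields h_x ≥ 0, the endpoint covariance admits the exact random-current representation Cov(σ_0, σ_N) = ∏_{x=0}^{N-1} tanh(J_x) · [ P(n^Λ even on all edges)·P(n^g ≡ 0) / P(∂n^Λ = ∂n^g) ]², where n^Λ and n^g are independent Poisson arrival processes with rates J_x on lattice edges and h_x on ghost edges respectively. -/

import Mathlib

open Finset

/-- The spin value of a Boolean: `true ↦ +1`, `false ↦ -1`. -/
noncomputable def sp (b : Bool) : ℝ := if b then 1 else -1

/-- Hamiltonian of the 1D Ising chain on `{0, …, N}` with couplings `J` and fields `h`. -/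
noncomputable def ham (N : ℕ) (J : Fin N → ℝ) (h : Fin (N + 1) → ℝ)
    (σ : Fin (N + 1) → Bool) : ℝ :=
  -(∑ x : Fin N, J x * sp (σ x.castSucc) * sp (σ x.succ)) - ∑ x : Fin (N + 1), h x * sp (σ x)

/-- Partition function of the 1D Ising chain. -/
noncomputable def part (N : ℕ) (J : Fin N → ℝ) (h : Fin (N + 1) → ℝ) : ℝ :=
  ∑ σ : Fin (N + 1) → Bool, Real.exp (-(ham N J h σ))

/-- Gibbs probability of a configuration. -/
noncomputable def gibbs (N : ℕ) (J : Fin N → ℝ) (h : Fin (N + 1) → ℝ)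
    (σ : Fin (N + 1) → Bool) : ℝ :=
  Real.exp (-(ham N J h σ)) / part N J h

/-- Gibbs expectation of an observable. -/
noncomputable def gibbsE (N : ℕ) (J : Fin N → ℝ) (h : Fin (N + 1) → ℝ)
    (f : (Fin (N + 1) → Bool) → ℝ) : ℝ :=
  ∑ σ : Fin (N + 1) → Bool, gibbs N J h σ * f σ

/-- Covariance of the endpoint spins `σ_0` and `σ_N` under the Gibbs measure. -/
noncomputable def covEnds (N : ℕ) (J : Fin N → ℝ) (h : Fin (N + 1) → ℝ) : ℝ :=
  gibbsE N J h (fun σ => sp (σ 0) * sp (σ (Fin.last N))) -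
    gibbsE N J h (fun σ => sp (σ 0)) * gibbsE N J h (fun σ => sp (σ (Fin.last N)))

/-- Total number of arrivals of the lattice current `nL` at the vertex `v` of `{0, …, N}`
(edge `x` joins vertices `x` and `x+1`). -/
def touch (N : ℕ) (nL : Fin N → ℕ) (v : Fin (N + 1)) : ℕ :=
  ∑ x : Fin N, if v = x.castSucc ∨ v = x.succ then nL x else 0

/-- The sum of the ghost current over the vertices to the left of the edge `x`
(i.e. over vertices `y ≤ x`). -/
def lsum (N : ℕ) (ng : Fin (N + 1) → ℕ) (x : Fin N) : ℕ :=
  ∑ y : Fin (N + 1), if (y : ℕ) ≤ (x : ℕ) then ng y else 0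

/-- The sum of the ghost current over the vertices to the right of the edge `x`
(i.e. over vertices `y ≥ x + 1`). -/
def rsum (N : ℕ) (ng : Fin (N + 1) → ℕ) (x : Fin N) : ℕ :=
  ∑ y : Fin (N + 1), if (x : ℕ) + 1 ≤ (y : ℕ) then ng y else 0

/-- The Poisson probability mass function with rate `r`. -/
noncomputable def poisPMF (r : ℝ) (k : ℕ) : ℝ := Real.exp (-r) * r ^ k / (Nat.factorial k)


lemma sum_sp_pow (m : ℕ) : ∑ b : Bool, sp b ^ m = if Even m then 2 else 0 := by
  rw [Fintype.sum_bool]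
  by_cases hm : Even m
  · simp [sp, hm, Even.neg_one_pow hm]; norm_num
  · simp [sp, hm, Odd.neg_one_pow (Nat.not_even_iff_odd.1 hm)]

lemma hasSum_pois (r s : ℝ) : HasSum (fun k => poisPMF r k * s ^ k) (Real.exp (r * s - r)) := by
  have h := NormedSpace.expSeries_div_hasSum_exp (r * s)
  have h2 := h.mul_left (Real.exp (-r))
  rw [← Real.exp_eq_exp_ℝ] at h2
  rw [show Real.exp (r*s-r) = Real.exp (-r) * Real.exp (r*s) by rw [← Real.exp_add]; ring_nf]
  convert h2 using 2 with k
  · rfl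
  simp [poisPMF, mul_pow]
  ring

lemma abs_sp_pow (b : Bool) (k : ℕ) : |sp b ^ k| = 1 := by
  cases b <;> simp [sp]

lemma summable_abs_pois (r : ℝ) (hr : 0 ≤ r) (b : Bool) :
    Summable (fun k => |poisPMF r k * sp b ^ k|) := by
  have h := (hasSum_pois r 1).summable
  simp only [mul_one, one_pow] at h
  refine h.congr fun k => ?_
  rw [abs_mul, abs_sp_pow, mul_one, abs_of_nonneg]
  unfold poisPMF; positivity

lemma hasSum_mul_pair {A B : Type*} (a : A → ℝ) (b : B → ℝ) {s t : ℝ} (h1 : HasSum a s)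
    (h2 : HasSum b t) (h3 : Summable fun q : A × B => a q.1 * b q.2) :
    HasSum (fun q : A × B => a q.1 * b q.2) (s * t) := h1.mul h2 h3

lemma hasSum_pi : ∀ {n : ℕ} (f : Fin n → ℕ → ℝ), (∀ i, Summable fun k => |f i k|) →
    HasSum (fun g : Fin n → ℕ => ∏ i, f i (g i)) (∏ i, ∑' k, f i k) := by
  intro n
  induction n with
  | zero =>
    intro f _
    have : HasSum (fun g : Fin 0 → ℕ => ∏ i, f i (g i)) (∏ i : Fin 0, f i ((default : Fin 0 → ℕ) i)) :=
      hasSum_single default (fun g hg => absurd (Subsingleton.elim g default) hg)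
    simpa using this
  | succ n ih =>
    intro f hf
    have h0 : HasSum (f 0) (∑' k, f 0 k) := ((hf 0).of_abs).hasSum
    have habs : ∀ i : Fin n, Summable fun k => |f i.succ k| := fun i => hf i.succ
    obtain ⟨G, hG⟩ : ∃ G : (Fin n → ℕ) → ℝ, G = fun g => ∏ i, f i.succ (g i) := ⟨_, rfl⟩
    have h2 : HasSum G (∏ i : Fin n, ∑' k, f i.succ k) := by
      rw [hG]; exact ih (fun i k => f i.succ k) habs
    have habs2 : ∀ i : Fin n, Summable fun k => |(fun k' => |f i.succ k'|) k| := by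
      intro i; simpa [abs_abs] using habs i
    have h2abs : HasSum (fun g : Fin n → ℕ => ∏ i, |f i.succ (g i)|) (∏ i : Fin n, ∑' k, |f i.succ k|) :=
      ih (fun i k => |f i.succ k|) habs2
    have hsummul : Summable (fun q : ℕ × (Fin n → ℕ) => f 0 q.1 * G q.2) := by
      rw [hG]
      have := Summable.mul_of_nonneg (hf 0) h2abs.summable
        (fun k => abs_nonneg _) (fun g => Finset.prod_nonneg fun i _ => abs_nonneg _)
      refine Summable.of_abs (this.congr fun q => ?_)
      rw [abs_mul, Finset.abs_prod]
    have hmul : HasSum (fun q : ℕ × (Fin n → ℕ) => f 0 q.1 * G q.2)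
        ((∑' k, f 0 k) * ∏ i : Fin n, ∑' k, f i.succ k) :=
      hasSum_mul_pair (f 0) G h0 h2 hsummul
    have key : (fun g : Fin (n+1) → ℕ => ∏ i, f i (g i)) =
        (fun q : ℕ × (Fin n → ℕ) => f 0 q.1 * G q.2) ∘ (Fin.consEquiv (fun _ => ℕ)).symm := by
      rw [hG]; funext g
      simp [Fin.prod_univ_succ, Fin.consEquiv, Fin.tail]
    rw [Fin.prod_univ_succ, key]
    exact (((Fin.consEquiv (fun _ => ℕ)).symm).hasSum_iff).2 hmul

lemma summable_abs_pi {n : ℕ} (f : Fin n → ℕ → ℝ) (hf : ∀ i, Summable fun k => |f i k|) :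
    Summable (fun g : Fin n → ℕ => |∏ i, f i (g i)|) := by
  have := (hasSum_pi (fun i k => |f i k|) (by intro i; simpa [abs_abs] using hf i)).summable
  refine this.congr fun g => ?_
  rw [Finset.abs_prod]
lemma summable_pair {A B : Type*} (a : A → ℝ) (b : B → ℝ) (ha : Summable fun x => |a x|)
    (hb : Summable fun x => |b x|) : Summable (fun q : A × B => a q.1 * b q.2) :=
  Summable.of_abs ((ha.mul_of_nonneg hb (fun _ => abs_nonneg _) (fun _ => abs_nonneg _)).congr
    fun q => (abs_mul _ _).symm)

lemma tsum_pair {A B : Type*} (a : A → ℝ) (b : B → ℝ) (ha : Summable fun x => |a x|)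
    (hb : Summable fun x => |b x|) :
    ∑' q : A × B, a q.1 * b q.2 = (∑' x, a x) * (∑' x, b x) :=
  (hasSum_mul_pair a b ha.of_abs.hasSum hb.of_abs.hasSum (summable_pair a b ha hb)).tsum_eq

lemma prod_ite_two {ι : Type*} [Fintype ι] (p : ι → Prop) [DecidablePred p] :
    ∏ x : ι, (if p x then (2:ℝ) else 0) = if (∀ x, p x) then 2 ^ (Fintype.card ι) else 0 := by
  have : ∀ x : ι, (if p x then (2:ℝ) else 0) = 2 * (if p x then 1 else 0) := by
    intro x; split <;> norm_num
  rw [Finset.prod_congr rfl (fun x _ => this x), Finset.prod_mul_distrib, Finset.prod_const,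
    Fintype.prod_boole]
  split <;> simp [Finset.card_univ]

lemma sum_spin {ι : Type*} [Fintype ι] [DecidableEq ι] (m : ι → ℕ) :
    ∑ η : ι → Bool, ∏ x, sp (η x) ^ m x
      = if (∀ x, Even (m x)) then (2:ℝ) ^ (Fintype.card ι) else 0 := by
  rw [← Fintype.prod_sum (fun x b => sp b ^ m x),
    Finset.prod_congr rfl (fun x _ => sum_sp_pow (m x)), prod_ite_two]
lemma pois_hasSum_pi {n : ℕ} (r : Fin n → ℝ) (hr : ∀ x, 0 ≤ r x) (s : Fin n → Bool) :
    HasSum (fun g : Fin n → ℕ => ∏ x, poisPMF (r x) (g x) * sp (s x) ^ (g x))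
      (∏ x, Real.exp (r x * sp (s x) - r x)) := by
  have H := hasSum_pi (fun x k => poisPMF (r x) k * sp (s x) ^ k)
    (fun x => summable_abs_pois _ (hr x) (s x))
  rwa [Finset.prod_congr rfl (fun x _ => (hasSum_pois (r x) (sp (s x))).tsum_eq)] at H

lemma summable_pois_pi {n : ℕ} (r : Fin n → ℝ) (hr : ∀ x, 0 ≤ r x) (s : Fin n → Bool) :
    Summable (fun g : Fin n → ℕ => ∏ x, poisPMF (r x) (g x) * sp (s x) ^ (g x)) :=
  (pois_hasSum_pi r hr s).summable

lemma A_eval {N : ℕ} (J : Fin N → ℝ) (hJ : ∀ x, 0 < J x) :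
    (∑' nL : Fin N → ℕ, if (∀ x, Even (nL x)) then ∏ x : Fin N, poisPMF (J x) (nL x) else 0)
      = (1/2) ^ N * ∏ x : Fin N, (1 + Real.exp (-(2 * J x))) := by
  have point : ∀ nL : Fin N → ℕ,
      (if (∀ x, Even (nL x)) then ∏ x : Fin N, poisPMF (J x) (nL x) else 0)
        = (1/2) ^ N * ∑ η : Fin N → Bool, ∏ x, poisPMF (J x) (nL x) * sp (η x) ^ (nL x) := by
    intro nL
    rw [← Fintype.prod_sum (fun x b => poisPMF (J x) (nL x) * sp b ^ (nL x))]
    have : ∀ x : Fin N, (∑ b : Bool, poisPMF (J x) (nL x) * sp b ^ (nL x))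
        = poisPMF (J x) (nL x) * (if Even (nL x) then 2 else 0) := by
      intro x; rw [← Finset.mul_sum, sum_sp_pow]
    rw [Finset.prod_congr rfl (fun x _ => this x), Finset.prod_mul_distrib, prod_ite_two]
    by_cases hc : ∀ x, Even (nL x) <;>
      simp [hc, Fintype.card_fin, mul_comm, mul_assoc, ← mul_pow]
  rw [tsum_congr point, tsum_mul_left, Summable.tsum_finsetSum
    (fun η _ => summable_pois_pi J (fun x => (hJ x).le) η)]
  congr 1
  rw [Finset.sum_congr rfl (fun η _ => (pois_hasSum_pi J (fun x => (hJ x).le) η).tsum_eq),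
    ← Fintype.prod_sum (fun x b => Real.exp (J x * sp b - J x))]
  refine Finset.prod_congr rfl fun x _ => ?_
  rw [Fintype.sum_bool]
  simp [sp]
  ring_nf
lemma B_eval {N : ℕ} (h : Fin (N+1) → ℝ) :
    (∑' ng : Fin (N+1) → ℕ, if ng = 0 then ∏ x : Fin (N+1), poisPMF (h x) (ng x) else 0)
      = ∏ v : Fin (N+1), Real.exp (-(h v)) := by
  rw [tsum_eq_single (0 : Fin (N+1) → ℕ) (fun b' hb' => by simp [hb'])]
  simp [poisPMF]

lemma prod_edge_vertex {N : ℕ} (n : Fin N → ℕ) (σ : Fin (N+1) → Bool) :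
    ∏ x : Fin N, (sp (σ x.castSucc) * sp (σ x.succ)) ^ n x
      = ∏ v : Fin (N+1), sp (σ v) ^ touch N n v := by
  have step1 : ∀ x : Fin N, (sp (σ x.castSucc) * sp (σ x.succ)) ^ n x
      = ∏ v : Fin (N+1), sp (σ v) ^ (if v = x.castSucc ∨ v = x.succ then n x else 0) := by
    intro x
    have hne : x.castSucc ≠ x.succ := ne_of_lt (Fin.castSucc_lt_succ (i := x))
    have hsplit : ∀ v : Fin (N+1), (if v = x.castSucc ∨ v = x.succ then n x else 0)
        = (if v = x.castSucc then n x else 0) + (if v = x.succ then n x else 0) := by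
      intro v
      by_cases h1 : v = x.castSucc
      · by_cases h2 : v = x.succ
        · exact absurd (h1.symm.trans h2) hne
        · simp [h1, h2]
          exact fun hcs => absurd hcs hne
      · simp [h1]
    rw [Finset.prod_congr rfl (fun v _ => by rw [hsplit v, pow_add]), Finset.prod_mul_distrib]
    have e1 : ∏ v : Fin (N+1), sp (σ v) ^ (if v = x.castSucc then n x else 0)
        = sp (σ x.castSucc) ^ n x := by
      have hv : ∀ v : Fin (N+1), sp (σ v) ^ (if v = x.castSucc then n x else 0)
          = (if v = x.castSucc then sp (σ v) ^ n x else 1) := by intro v; split <;> simp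
      rw [Finset.prod_congr rfl (fun v _ => hv v),
        Finset.prod_ite_eq' Finset.univ x.castSucc (fun v => sp (σ v) ^ n x)]
      simp
    have e2 : ∏ v : Fin (N+1), sp (σ v) ^ (if v = x.succ then n x else 0)
        = sp (σ x.succ) ^ n x := by
      have hv : ∀ v : Fin (N+1), sp (σ v) ^ (if v = x.succ then n x else 0)
          = (if v = x.succ then sp (σ v) ^ n x else 1) := by intro v; split <;> simp
      rw [Finset.prod_congr rfl (fun v _ => hv v),
        Finset.prod_ite_eq' Finset.univ x.succ (fun v => sp (σ v) ^ n x)]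
      simp
    rw [e1, e2, mul_pow]
  rw [Finset.prod_congr rfl (fun x _ => step1 x), Finset.prod_comm]
  exact Finset.prod_congr rfl fun v _ => by
    rw [Finset.prod_pow_eq_pow_sum]; rfl
lemma sp_mul_sp (a b : Bool) : sp a * sp b = sp (a == b) := by
  cases a <;> cases b <;> simp [sp]

lemma C_eval {N : ℕ} (J : Fin N → ℝ) (h : Fin (N + 1) → ℝ) (hJ : ∀ x, 0 < J x)
    (hh : ∀ x, 0 ≤ h x) :
    (∑' p : (Fin N → ℕ) × (Fin (N + 1) → ℕ),
        if (∀ v : Fin (N + 1), (Odd (touch N p.1 v) ↔ Odd (p.2 v))) then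
          (∏ x : Fin N, poisPMF (J x) (p.1 x)) * ∏ x : Fin (N + 1), poisPMF (h x) (p.2 x)
        else 0)
      = (1/2) ^ (N+1) *
          ((∏ x : Fin N, Real.exp (-J x)) * (∏ v : Fin (N+1), Real.exp (-(h v)))
            * part N J h) := by
  have point : ∀ p : (Fin N → ℕ) × (Fin (N + 1) → ℕ),
      (if (∀ v : Fin (N + 1), (Odd (touch N p.1 v) ↔ Odd (p.2 v))) then
          (∏ x : Fin N, poisPMF (J x) (p.1 x)) * ∏ x : Fin (N + 1), poisPMF (h x) (p.2 x)
        else 0)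
      = (1/2) ^ (N+1) * ∑ σ : Fin (N+1) → Bool,
          (∏ x : Fin N, poisPMF (J x) (p.1 x) * sp (σ x.castSucc == σ x.succ) ^ (p.1 x)) *
            (∏ v : Fin (N+1), poisPMF (h v) (p.2 v) * sp (σ v) ^ (p.2 v)) := by
    intro p
    have inner : ∀ σ : Fin (N+1) → Bool,
        (∏ x : Fin N, poisPMF (J x) (p.1 x) * sp (σ x.castSucc == σ x.succ) ^ (p.1 x)) *
          (∏ v : Fin (N+1), poisPMF (h v) (p.2 v) * sp (σ v) ^ (p.2 v))
        = ((∏ x : Fin N, poisPMF (J x) (p.1 x)) * ∏ x : Fin (N + 1), poisPMF (h x) (p.2 x)) *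
            ∏ v : Fin (N+1), sp (σ v) ^ (touch N p.1 v + p.2 v) := by
      intro σ
      rw [Finset.prod_mul_distrib, Finset.prod_mul_distrib]
      have he : ∏ x : Fin N, sp (σ x.castSucc == σ x.succ) ^ (p.1 x)
          = ∏ v : Fin (N+1), sp (σ v) ^ touch N p.1 v := by
        rw [← prod_edge_vertex]
        exact Finset.prod_congr rfl fun x _ => by rw [sp_mul_sp]
      rw [he]
      have hm : (∏ v : Fin (N+1), sp (σ v) ^ touch N p.1 v) *
          (∏ v : Fin (N+1), sp (σ v) ^ (p.2 v))
          = ∏ v : Fin (N+1), sp (σ v) ^ (touch N p.1 v + p.2 v) := by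
        rw [← Finset.prod_mul_distrib]
        exact Finset.prod_congr rfl fun v _ => (pow_add _ _ _).symm
      calc (∏ x : Fin N, poisPMF (J x) (p.1 x)) * (∏ v : Fin (N+1), sp (σ v) ^ touch N p.1 v) *
            ((∏ v : Fin (N+1), poisPMF (h v) (p.2 v)) * ∏ v : Fin (N+1), sp (σ v) ^ (p.2 v))
          = ((∏ x : Fin N, poisPMF (J x) (p.1 x)) * ∏ x : Fin (N + 1), poisPMF (h x) (p.2 x)) *
            ((∏ v : Fin (N+1), sp (σ v) ^ touch N p.1 v) * ∏ v : Fin (N+1), sp (σ v) ^ (p.2 v)) := by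
            ring
        _ = _ := by rw [hm]
    rw [Finset.sum_congr rfl (fun σ _ => inner σ), ← Finset.mul_sum, sum_spin, Fintype.card_fin]
    have hcond : (∀ v : Fin (N+1), Even (touch N p.1 v + p.2 v))
        ↔ (∀ v : Fin (N + 1), (Odd (touch N p.1 v) ↔ Odd (p.2 v))) := by
      refine forall_congr' fun v => ?_
      rw [Nat.even_add, ← Nat.not_even_iff_odd, ← Nat.not_even_iff_odd, not_iff_not]
    by_cases hc : ∀ v : Fin (N + 1), (Odd (touch N p.1 v) ↔ Odd (p.2 v))
    · rw [if_pos hc, if_pos (hcond.2 hc)]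
      rw [show ((1:ℝ)/2) ^ (N+1) * (_ * (2:ℝ) ^ (N+1)) = _ from rfl]
      ring_nf
      rw [mul_comm, mul_assoc, ← mul_pow]
      norm_num
    · rw [if_neg hc, if_neg (fun hq => hc (hcond.1 hq))]
      simp
  rw [tsum_congr point, tsum_mul_left]
  congr 1
  have hsumm : ∀ σ : Fin (N+1) → Bool,
      Summable (fun p : (Fin N → ℕ) × (Fin (N + 1) → ℕ) =>
        (∏ x : Fin N, poisPMF (J x) (p.1 x) * sp (σ x.castSucc == σ x.succ) ^ (p.1 x)) *
          (∏ v : Fin (N+1), poisPMF (h v) (p.2 v) * sp (σ v) ^ (p.2 v))) := by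
    intro σ
    exact summable_pair
      (fun nL : Fin N → ℕ => ∏ x, poisPMF (J x) (nL x) * sp (σ x.castSucc == σ x.succ) ^ (nL x))
      (fun ng : Fin (N+1) → ℕ => ∏ v, poisPMF (h v) (ng v) * sp (σ v) ^ (ng v))
      (summable_abs_pi (fun x k => poisPMF (J x) k * sp (σ x.castSucc == σ x.succ) ^ k)
        (fun x => summable_abs_pois _ (hJ x).le _))
      (summable_abs_pi (fun v k => poisPMF (h v) k * sp (σ v) ^ k)
        (fun v => summable_abs_pois _ (hh v) _))
  rw [Summable.tsum_finsetSum (fun σ _ => hsumm σ)]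
  have hval : ∀ σ : Fin (N+1) → Bool,
      (∑' p : (Fin N → ℕ) × (Fin (N + 1) → ℕ),
        (∏ x : Fin N, poisPMF (J x) (p.1 x) * sp (σ x.castSucc == σ x.succ) ^ (p.1 x)) *
          (∏ v : Fin (N+1), poisPMF (h v) (p.2 v) * sp (σ v) ^ (p.2 v)))
      = (∏ x : Fin N, Real.exp (J x * sp (σ x.castSucc == σ x.succ) - J x)) *
          (∏ v : Fin (N+1), Real.exp (h v * sp (σ v) - h v)) := by
    intro σ
    rw [tsum_pair
      (fun nL : Fin N → ℕ => ∏ x, poisPMF (J x) (nL x) * sp (σ x.castSucc == σ x.succ) ^ (nL x))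
      (fun ng : Fin (N+1) → ℕ => ∏ v, poisPMF (h v) (ng v) * sp (σ v) ^ (ng v))
      (summable_abs_pi (fun x k => poisPMF (J x) k * sp (σ x.castSucc == σ x.succ) ^ k)
        (fun x => summable_abs_pois _ (hJ x).le _))
      (summable_abs_pi (fun v k => poisPMF (h v) k * sp (σ v) ^ k)
        (fun v => summable_abs_pois _ (hh v) _)),
      (pois_hasSum_pi J (fun x => (hJ x).le) (fun x => σ x.castSucc == σ x.succ)).tsum_eq,
      (pois_hasSum_pi h hh σ).tsum_eq]
  rw [Finset.sum_congr rfl (fun σ _ => hval σ)]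
  have hfin : ∀ σ : Fin (N+1) → Bool,
      (∏ x : Fin N, Real.exp (J x * sp (σ x.castSucc == σ x.succ) - J x)) *
        (∏ v : Fin (N+1), Real.exp (h v * sp (σ v) - h v))
      = (∏ x : Fin N, Real.exp (-J x)) * (∏ v : Fin (N+1), Real.exp (-(h v)))
          * Real.exp (-(ham N J h σ)) := by
    intro σ
    have L : (∏ x : Fin N, Real.exp (J x * sp (σ x.castSucc == σ x.succ) - J x)) *
        (∏ v : Fin (N+1), Real.exp (h v * sp (σ v) - h v))
        = Real.exp ((∑ x : Fin N, (J x * sp (σ x.castSucc == σ x.succ) - J x)) +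
            ∑ v : Fin (N+1), (h v * sp (σ v) - h v)) := by
      rw [← Real.exp_sum, ← Real.exp_sum, ← Real.exp_add]
    have R : (∏ x : Fin N, Real.exp (-J x)) * (∏ v : Fin (N+1), Real.exp (-(h v)))
          * Real.exp (-(ham N J h σ))
        = Real.exp ((∑ x : Fin N, -J x) + (∑ v : Fin (N+1), -(h v)) + -(ham N J h σ)) := by
      rw [← Real.exp_sum, ← Real.exp_sum, ← Real.exp_add, ← Real.exp_add]
    rw [L, R]
    congr 1
    have hs : ∑ x : Fin N, (J x * sp (σ x.castSucc == σ x.succ) - J x)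
        = ∑ x : Fin N, (J x * sp (σ x.castSucc) * sp (σ x.succ) - J x) :=
      Finset.sum_congr rfl fun x _ => by rw [mul_assoc, sp_mul_sp]
    rw [hs, ham, Finset.sum_sub_distrib, Finset.sum_sub_distrib]
    simp only [Finset.sum_neg_distrib]
    ring
  rw [Finset.sum_congr rfl (fun σ _ => hfin σ), ← Finset.mul_sum]
  rfl
noncomputable def Sab (N : ℕ) (J : Fin N → ℝ) (h : Fin (N+1) → ℝ) (a b : Bool) : ℝ :=
  ∑ σ : Fin (N+1) → Bool,
    if σ 0 = a ∧ σ (Fin.last N) = b then Real.exp (-(ham N J h σ)) else 0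

lemma ham_cons (N : ℕ) (J : Fin (N+1) → ℝ) (h : Fin (N+2) → ℝ) (c : Bool)
    (τ : Fin (N+1) → Bool) :
    -(ham (N+1) J h (Fin.cons c τ)) =
      (h 0 * sp c + J 0 * sp c * sp (τ 0)) +
        -(ham N (fun x => J x.succ) (fun v => h v.succ) τ) := by
  simp only [ham, Fin.sum_univ_succ, Fin.cons_zero, Fin.cons_succ]
  have e1 : ∀ x : Fin N, (Fin.cons c τ : Fin (N+2) → Bool) x.succ.castSucc = τ x.castSucc := by
    intro x; rw [← Fin.succ_castSucc, Fin.cons_succ]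
  have e2 : (Fin.cons c τ : Fin (N+2) → Bool) (0 : Fin (N+1)).castSucc = c := by
    rw [Fin.castSucc_zero, Fin.cons_zero]
  have hs : ∑ x : Fin N, J x.succ * sp ((Fin.cons c τ : Fin (N+2) → Bool) x.succ.castSucc) *
      sp (τ x.succ) = ∑ x : Fin N, J x.succ * sp (τ x.castSucc) * sp (τ x.succ) :=
    Finset.sum_congr rfl fun x _ => by rw [e1]
  rw [e2, hs]
  ring

lemma sum_pi_succ_bool {n : ℕ} (F : (Fin (n+1) → Bool) → ℝ) :
    ∑ σ : Fin (n+1) → Bool, F σ = ∑ c : Bool, ∑ τ : Fin n → Bool, F (Fin.cons c τ) := by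
  rw [show (∑ c : Bool, ∑ τ : Fin n → Bool, F (Fin.cons c τ))
      = ∑ q : Bool × (Fin n → Bool), F (Fin.cons q.1 q.2) from
    (Fintype.sum_prod_type (f := fun q : Bool × (Fin n → Bool) => F (Fin.cons q.1 q.2))).symm]
  exact Fintype.sum_equiv (Fin.consEquiv (fun _ => Bool)).symm _ _ fun σ => by
    simp [Fin.consEquiv, Fin.cons_self_tail]

lemma Sab_succ (N : ℕ) (J : Fin (N+1) → ℝ) (h : Fin (N+2) → ℝ) (a b : Bool) :
    Sab (N+1) J h a b = ∑ c : Bool, Real.exp (h 0 * sp a + J 0 * sp a * sp c) *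
      Sab N (fun x => J x.succ) (fun v => h v.succ) c b := by
  rw [Sab, sum_pi_succ_bool]
  have step : ∀ (c : Bool) (τ : Fin (N+1) → Bool),
      (if (Fin.cons c τ : Fin (N+2) → Bool) 0 = a ∧
          (Fin.cons c τ : Fin (N+2) → Bool) (Fin.last (N+1)) = b then
        Real.exp (-(ham (N+1) J h (Fin.cons c τ))) else 0)
      = (if c = a ∧ τ (Fin.last N) = b then
          Real.exp (h 0 * sp c + J 0 * sp c * sp (τ 0)) *
            Real.exp (-(ham N (fun x => J x.succ) (fun v => h v.succ) τ)) else 0) := by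
    intro c τ
    have hlast : (Fin.cons c τ : Fin (N+2) → Bool) (Fin.last (N+1)) = τ (Fin.last N) := by
      rw [← Fin.succ_last, Fin.cons_succ]
    rw [Fin.cons_zero, hlast, ham_cons, Real.exp_add]
  rw [Finset.sum_congr rfl fun c _ => Finset.sum_congr rfl fun τ _ => step c τ]
  have hL : (∑ c : Bool, ∑ τ : Fin (N+1) → Bool,
      if c = a ∧ τ (Fin.last N) = b then
        Real.exp (h 0 * sp c + J 0 * sp c * sp (τ 0)) *
          Real.exp (-(ham N (fun x => J x.succ) (fun v => h v.succ) τ)) else 0)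
      = ∑ τ : Fin (N+1) → Bool, (if τ (Fin.last N) = b then
          Real.exp (h 0 * sp a + J 0 * sp a * sp (τ 0)) *
            Real.exp (-(ham N (fun x => J x.succ) (fun v => h v.succ) τ)) else 0) := by
    rw [Fintype.sum_bool]
    cases a <;> simp
  rw [hL]
  have hR : ∀ c : Bool, Real.exp (h 0 * sp a + J 0 * sp a * sp c) *
      Sab N (fun x => J x.succ) (fun v => h v.succ) c b
      = ∑ τ : Fin (N+1) → Bool, (if τ 0 = c ∧ τ (Fin.last N) = b then
          Real.exp (h 0 * sp a + J 0 * sp a * sp c) *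
            Real.exp (-(ham N (fun x => J x.succ) (fun v => h v.succ) τ)) else 0) := by
    intro c
    rw [Sab, Finset.mul_sum]
    exact Finset.sum_congr rfl fun τ _ => by split <;> simp
  rw [Finset.sum_congr rfl fun c _ => hR c, Finset.sum_comm]
  refine Finset.sum_congr rfl fun τ _ => ?_
  rw [Fintype.sum_bool]
  by_cases hb : τ (Fin.last N) = b <;> cases h0 : τ 0 <;> simp [hb, h0]
lemma det_mul_expand (Ltt Ltf Lft Lff Ttt Ttf Tft Tff : ℝ) :
    (Ltt*Ttt + Ltf*Tft) * (Lft*Ttf + Lff*Tff) - (Ltt*Ttf + Ltf*Tff) * (Lft*Ttt + Lff*Tft)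
      = (Ltt*Lff - Ltf*Lft) * (Ttt*Tff - Ttf*Tft) := by ring

lemma Sab_zero (J : Fin 0 → ℝ) (h : Fin 1 → ℝ) (a b : Bool) :
    Sab 0 J h a b = if a = b then Real.exp (h 0 * sp a) else 0 := by
  rw [Sab, sum_pi_succ_bool]
  have key : ∀ (c : Bool) (τ : Fin 0 → Bool),
      (if (Fin.cons c τ : Fin 1 → Bool) 0 = a ∧ (Fin.cons c τ : Fin 1 → Bool) (Fin.last 0) = b
        then Real.exp (-(ham 0 J h (Fin.cons c τ))) else 0)
      = (if c = a ∧ c = b then Real.exp (h 0 * sp c) else 0) := by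
    intro c τ
    have h1 : (Fin.cons c τ : Fin 1 → Bool) (Fin.last 0) = c := rfl
    have h2 : -(ham 0 J h (Fin.cons c τ)) = h 0 * sp c := by
      simp [ham, Fin.sum_univ_succ]
    rw [Fin.cons_zero, h1, h2]
  rw [Finset.sum_congr rfl fun c _ => Finset.sum_congr rfl fun τ _ => key c τ]
  rw [Finset.sum_congr rfl fun c (_ : c ∈ Finset.univ) =>
    Finset.sum_const ((if c = a ∧ c = b then Real.exp (h 0 * sp c) else 0))]
  have hcard : (Finset.univ : Finset (Fin 0 → Bool)).card = 1 := by
    simp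
  rw [Fintype.sum_bool]
  cases a <;> cases b <;> simp [hcard]

lemma detS : ∀ (N : ℕ) (J : Fin N → ℝ) (h : Fin (N+1) → ℝ),
    Sab N J h true true * Sab N J h false false
      - Sab N J h true false * Sab N J h false true
      = ∏ x : Fin N, (Real.exp (2 * J x) - Real.exp (-(2 * J x))) := by
  intro N
  induction N with
  | zero =>
    intro J h
    rw [Sab_zero, Sab_zero, Sab_zero, Sab_zero]
    simp [← Real.exp_add, sp]
  | succ n ih =>
    intro J h
    simp only [Sab_succ, Fintype.sum_bool]
    rw [det_mul_expand, Fin.prod_univ_succ, ← ih (fun x => J x.succ) (fun v => h v.succ)]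
    have k1 : Real.exp (h 0 * sp true + J 0 * sp true * sp true) *
        Real.exp (h 0 * sp false + J 0 * sp false * sp false) = Real.exp (2 * J 0) := by
      rw [← Real.exp_add]; congr 1; simp [sp]; ring
    have k2 : Real.exp (h 0 * sp true + J 0 * sp true * sp false) *
        Real.exp (h 0 * sp false + J 0 * sp false * sp true) = Real.exp (-(2 * J 0)) := by
      rw [← Real.exp_add]; congr 1; simp [sp]; ring
    rw [k1, k2]
lemma part_pos (N : ℕ) (J : Fin N → ℝ) (h : Fin (N+1) → ℝ) : 0 < part N J h :=
  Finset.sum_pos (fun σ _ => Real.exp_pos _) ⟨default, Finset.mem_univ _⟩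

lemma gibbsE_eq (N : ℕ) (J : Fin N → ℝ) (h : Fin (N+1) → ℝ) (f : (Fin (N+1) → Bool) → ℝ) :
    gibbsE N J h f = (∑ σ : Fin (N+1) → Bool, Real.exp (-(ham N J h σ)) * f σ) / part N J h := by
  rw [gibbsE, Finset.sum_div]
  exact Finset.sum_congr rfl fun σ _ => by rw [gibbs, div_mul_eq_mul_div]

lemma Z_eq (N : ℕ) (J : Fin N → ℝ) (h : Fin (N+1) → ℝ) :
    part N J h = Sab N J h true true + Sab N J h true false
      + Sab N J h false true + Sab N J h false false := by
  rw [part, Sab, Sab, Sab, Sab, ← Finset.sum_add_distrib, ← Finset.sum_add_distrib,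
    ← Finset.sum_add_distrib]
  refine Finset.sum_congr rfl fun σ _ => ?_
  cases h0 : σ 0 <;> cases hN : σ (Fin.last N) <;> simp [h0, hN]

lemma U_eq (N : ℕ) (J : Fin N → ℝ) (h : Fin (N+1) → ℝ) :
    ∑ σ : Fin (N+1) → Bool, Real.exp (-(ham N J h σ)) * (sp (σ 0) * sp (σ (Fin.last N)))
      = Sab N J h true true - Sab N J h true false
        - Sab N J h false true + Sab N J h false false := by
  rw [Sab, Sab, Sab, Sab, ← Finset.sum_sub_distrib, ← Finset.sum_sub_distrib,
    ← Finset.sum_add_distrib]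
  refine Finset.sum_congr rfl fun σ _ => ?_
  cases h0 : σ 0 <;> cases hN : σ (Fin.last N) <;> simp [h0, hN, sp]
lemma V_eq (N : ℕ) (J : Fin N → ℝ) (h : Fin (N+1) → ℝ) :
    ∑ σ : Fin (N+1) → Bool, Real.exp (-(ham N J h σ)) * sp (σ 0)
      = Sab N J h true true + Sab N J h true false
        - Sab N J h false true - Sab N J h false false := by
  rw [Sab, Sab, Sab, Sab, ← Finset.sum_add_distrib, ← Finset.sum_sub_distrib,
    ← Finset.sum_sub_distrib]
  refine Finset.sum_congr rfl fun σ _ => ?_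
  cases h0 : σ 0 <;> cases hN : σ (Fin.last N) <;> simp [h0, hN, sp]

lemma W_eq (N : ℕ) (J : Fin N → ℝ) (h : Fin (N+1) → ℝ) :
    ∑ σ : Fin (N+1) → Bool, Real.exp (-(ham N J h σ)) * sp (σ (Fin.last N))
      = Sab N J h true true - Sab N J h true false
        + Sab N J h false true - Sab N J h false false := by
  rw [Sab, Sab, Sab, Sab, ← Finset.sum_sub_distrib, ← Finset.sum_add_distrib,
    ← Finset.sum_sub_distrib]
  refine Finset.sum_congr rfl fun σ _ => ?_
  cases h0 : σ 0 <;> cases hN : σ (Fin.last N) <;> simp [h0, hN, sp]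

lemma covEnds_eq (N : ℕ) (J : Fin N → ℝ) (h : Fin (N+1) → ℝ) :
    covEnds N J h = 4 * (∏ x : Fin N, (Real.exp (2 * J x) - Real.exp (-(2 * J x))))
      / (part N J h) ^ 2 := by
  have hZ : part N J h ≠ 0 := (part_pos N J h).ne'
  have hZ' := hZ
  rw [Z_eq N J h] at hZ'
  rw [covEnds, gibbsE_eq, gibbsE_eq, gibbsE_eq, U_eq, V_eq, W_eq, ← detS N J h, Z_eq N J h]
  field_simp
  ring
lemma tanh_factor (x : ℝ) :
    Real.tanh x * (1 + Real.exp (-(2*x)))^2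
      = (Real.exp (2*x) - Real.exp (-(2*x))) * (Real.exp (-x))^2 := by
  have e2 : Real.exp (2*x) = Real.exp x * Real.exp x := by rw [← Real.exp_add]; ring_nf
  have hw : Real.exp x ≠ 0 := Real.exp_ne_zero x
  have hpos : (0:ℝ) < Real.exp x + (Real.exp x)⁻¹ := by positivity
  rw [Real.tanh_eq_sinh_div_cosh, Real.sinh_eq, Real.cosh_eq, Real.exp_neg, Real.exp_neg, e2]
  field_simp
  ring

theorem random_current_covariance_identity (N : ℕ) (J : Fin N → ℝ)
    (h : Fin (N + 1) → ℝ) (hJ : ∀ x, 0 < J x) (hh : ∀ x, 0 ≤ h x) :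
    covEnds N J h =
      (∏ x : Fin N, Real.tanh (J x)) *
        ((∑' nL : Fin N → ℕ,
              if (∀ x, Even (nL x)) then ∏ x : Fin N, poisPMF (J x) (nL x) else 0) *
            (∑' ng : Fin (N + 1) → ℕ,
              if ng = 0 then ∏ x : Fin (N + 1), poisPMF (h x) (ng x) else 0) /
          (∑' p : (Fin N → ℕ) × (Fin (N + 1) → ℕ),
              if (∀ v : Fin (N + 1), (Odd (touch N p.1 v) ↔ Odd (p.2 v))) then
                (∏ x : Fin N, poisPMF (J x) (p.1 x)) *
                  ∏ x : Fin (N + 1), poisPMF (h x) (p.2 x)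
              else 0)) ^ 2 := by
  rw [covEnds_eq N J h, A_eval J hJ, B_eval h, C_eval J h hJ hh]
  have hZ : part N J h ≠ 0 := (part_pos N J h).ne'
  have hPb : (∏ v : Fin (N+1), Real.exp (-(h v))) ≠ 0 :=
    Finset.prod_ne_zero_iff.2 fun v _ => Real.exp_ne_zero _
  have hPj : (∏ x : Fin N, Real.exp (-J x)) ≠ 0 :=
    Finset.prod_ne_zero_iff.2 fun x _ => Real.exp_ne_zero _
  have key2 : (∏ x : Fin N, (Real.exp (2*J x) - Real.exp (-(2*J x)))) *
      (∏ x : Fin N, Real.exp (-J x))^2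
      = (∏ x : Fin N, Real.tanh (J x)) * (∏ x : Fin N, (1 + Real.exp (-(2*J x))))^2 := by
    rw [← Finset.prod_pow, ← Finset.prod_pow, ← Finset.prod_mul_distrib,
      ← Finset.prod_mul_distrib]
    exact Finset.prod_congr rfl fun x _ => by rw [← tanh_factor (J x)]
  have hfrac : ((1/2:ℝ)^N * (∏ x : Fin N, (1 + Real.exp (-(2 * J x)))) *
        ∏ v : Fin (N+1), Real.exp (-(h v))) /
      ((1/2:ℝ)^(N+1) * ((∏ x : Fin N, Real.exp (-J x)) *
        (∏ v : Fin (N+1), Real.exp (-(h v))) * part N J h))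
      = 2 * (∏ x : Fin N, (1 + Real.exp (-(2 * J x)))) /
          ((∏ x : Fin N, Real.exp (-J x)) * part N J h) := by
    rw [pow_succ]
    have hhalf : ((1:ℝ)/2)^N ≠ 0 := by positivity
    field_simp
  rw [hfrac]
  rw [div_pow, mul_pow, mul_pow]
  field_simp
  linear_combination 4 * key2
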